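/- Let n, ℓ ≥ 1, let d : ZMod n → ℕ with d̄ = Σ_a d(a), and let D be the n×n matrix over ℤ[t] with D(a,a+1) = t^{d(a)} and 0 elsewhere. Let C = I + D + D² + ⋯ + D^{ℓ−1} (the graded Cartan matrix of the selfinjective Nakayama algebra kΔ_n/rad^ℓ with grading d). Then (1 − t^{d̄}) · det C = (1 − t^{d̄·ℓ/gcd(n,ℓ)})^{gcd(n,ℓ)} in ℤ[t]. -/

import Mathlib

open Polynomial Matrix

/-- The weighted cyclic shift matrix on `ZMod n` over `ℤ[t]`. -/
noncomputable def shiftMatrix (n : ℕ) (d : ZMod n → ℕ) : Matrix (ZMod n) (ZMod n) (Polynomial ℤ) :=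
  fun a b => if b = a + 1 then Polynomial.X ^ d a else 0

section CycDet

variable {R : Type*} [CommRing R]

/-- a general weighted cyclic shift matrix -/
def cycMatrix (m : ℕ) (w : ZMod m → R) : Matrix (ZMod m) (ZMod m) R :=
  fun a b => if b = a + 1 then w a else 0

/-- a general weighted shift-by-`s` matrix -/
def wshift (n : ℕ) (s : ℕ) (w : ZMod n → R) : Matrix (ZMod n) (ZMod n) R :=
  fun a b => if b = a + (s : ZMod n) then w a else 0

lemma addRight_one_eq_finRotate (k : ℕ) :
    Equiv.addRight (1 : ZMod (k+1)) = finRotate (k+1) := by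
  ext i
  exact (finRotate_succ_apply (i : Fin (k+1))).symm

lemma sign_addRight_one (m : ℕ) [NeZero m] :
    Equiv.Perm.sign (Equiv.addRight (1 : ZMod m)) = (-1)^(m-1) := by
  rcases m with _ | k
  · exact absurd rfl (NeZero.ne 0)
  · rw [addRight_one_eq_finRotate]
    exact sign_finRotate (k+1)

theorem det_one_sub_cycMatrix (m : ℕ) [NeZero m] (w : ZMod m → R) :
    (1 - cycMatrix m w).det = 1 - ∏ a, w a := by
  rcases m with _ | _ | k
  · exact absurd rfl (NeZero.ne 0)
  · -- m = 1
    haveI : Unique (ZMod (0+1)) := inferInstanceAs (Unique (Fin 1))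
    rw [Matrix.det_unique]
    have h1 : ∏ a : ZMod (0+1), w a = w default := by
      simp
      exact congrArg w (Subsingleton.elim _ _)
    rw [h1, Matrix.sub_apply, Matrix.one_apply_eq]
    unfold cycMatrix
    rw [if_pos (Subsingleton.elim _ _)]
    exact congrArg (fun x => 1 - w x) (Subsingleton.elim _ _)
  · -- m = k+2
    haveI : Fact (1 < k + 2) := ⟨by omega⟩
    have hone : (1 : ZMod (k+2)) ≠ 0 := one_ne_zero
    set c : Equiv.Perm (ZMod (k+2)) := Equiv.addRight (1 : ZMod (k+2)) with hc
    have hcinv : ∀ i, c⁻¹ i = i - 1 := by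
      intro i; simp [hc, Equiv.Perm.inv_def, sub_eq_add_neg]
    have hM : ∀ a b : ZMod (k+2), b ≠ a ∧ b ≠ a + 1 → (1 - cycMatrix (k+2) w) a b = 0 := by
      intro a b ⟨h1, h2⟩
      simp [cycMatrix, Matrix.sub_apply, Matrix.one_apply, h2, Ne.symm h1]
    have hclass : ∀ σ : Equiv.Perm (ZMod (k+2)),
        σ ∉ ({1, c⁻¹} : Finset (Equiv.Perm (ZMod (k+2)))) →
        ∏ i, (1 - cycMatrix (k+2) w) (σ i) i = 0 := by
      intro σ hσ
      simp only [Finset.mem_insert, Finset.mem_singleton] at hσ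
      push_neg at hσ
      obtain ⟨hσ1, hσ2⟩ := hσ
      by_cases hall : ∀ i, i = σ i ∨ i = σ i + 1
      · exfalso
        by_cases hid : ∀ i, σ i = i
        · exact hσ1 (Equiv.ext hid)
        · push_neg at hid
          obtain ⟨i0, hi0⟩ := hid
          have hi0' : σ i0 = i0 - 1 := by
            rcases hall i0 with h | h
            · exact absurd h.symm hi0
            · rw [eq_sub_iff_add_eq]; exact h.symm
          have step : ∀ i, σ i = i - 1 → σ (i - 1) = i - 1 - 1 := by
            intro i hi
            rcases hall (i-1) with h | h
            · exfalso
              have h2 : σ (i-1) = σ i := by rw [← h, hi]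
              have h3 := σ.injective h2
              exact hone (sub_eq_self.mp h3)
            · rw [eq_sub_iff_add_eq]; exact h.symm
          have key : ∀ t : ℕ, σ (i0 - t) = i0 - t - 1 := by
            intro t
            induction t with
            | zero => simpa using hi0'
            | succ s ih =>
              have h4 := step (i0 - s) ih
              have hcast : (i0 - ((s:ℕ)+1:ℕ) : ZMod (k+2)) = i0 - s - 1 := by
                push_cast; ring
              rw [hcast]; exact h4
          have hfin : σ = c⁻¹ := by
            ext j
            rw [hcinv]
            have h1 : (((i0 - j).val : ℕ) : ZMod (k+2)) = i0 - j :=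
              ZMod.natCast_rightInverse _
            have h5 := key (i0 - j).val
            rw [h1, sub_sub_cancel] at h5
            exact h5
          exact hσ2 hfin
      · push_neg at hall
        obtain ⟨i, hi1, hi2⟩ := hall
        exact Finset.prod_eq_zero (Finset.mem_univ i)
          (hM _ _ ⟨hi1, hi2⟩)
    rw [Matrix.det_apply]
    rw [← Finset.sum_subset (Finset.subset_univ {1, c⁻¹})
      (fun σ _ hσ => by rw [hclass σ hσ, smul_zero])]
    have hne : (1 : Equiv.Perm (ZMod (k+2))) ≠ c⁻¹ := by
      intro h
      have h6 : (0 : ZMod (k+2)) = c⁻¹ 0 := congrFun (congrArg (·.toFun) h) 0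
      rw [hcinv, zero_sub] at h6
      exact hone (neg_eq_zero.mp h6.symm)
    rw [Finset.sum_pair hne]
    have hterm1 : ∏ i, (1 - cycMatrix (k+2) w) ((1 : Equiv.Perm (ZMod (k+2))) i) i = 1 := by
      apply Finset.prod_eq_one
      intro i _
      have h7 : i ≠ i + 1 := fun h => hone (by simpa using (left_eq_add.mp h))
      simp [cycMatrix, Matrix.sub_apply, Matrix.one_apply, h7]
    have hterm2 : ∏ i, (1 - cycMatrix (k+2) w) (c⁻¹ i) i = (-1)^(k+2) * ∏ a, w a := by
      have h8 : ∀ i : ZMod (k+2), (1 - cycMatrix (k+2) w) (c⁻¹ i) i = - w (i - 1) := by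
        intro i
        rw [hcinv]
        have h1 : i - 1 ≠ i := fun h => hone (sub_eq_self.mp h)
        have h2 : i = (i - 1) + 1 := by ring
        simp [cycMatrix, Matrix.sub_apply, Matrix.one_apply, ← h2, h1]
      rw [Finset.prod_congr rfl (fun i _ => h8 i)]
      have h9 : ∀ i : ZMod (k+2), - w (i-1) = (-1) * w (i-1) := fun i => by ring
      rw [Finset.prod_congr rfl (fun i _ => h9 i), Finset.prod_mul_distrib,
        Finset.prod_const]
      congr 1
      · simp [ZMod.card]
      · exact Equiv.prod_comp (Equiv.subRight (1 : ZMod (k+2))) w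
    rw [hterm1, hterm2]
    have hsign1 : Equiv.Perm.sign (1 : Equiv.Perm (ZMod (k+2))) = 1 := by simp
    have hsign2 : Equiv.Perm.sign c⁻¹ = (-1)^(k+1) := by
      rw [Equiv.Perm.sign_inv, hc, sign_addRight_one]
      norm_num
    rw [hsign1, hsign2, one_smul]
    have hk : ((-1:R)^(k*2)) = 1 := by
      rw [mul_comm, pow_mul]; norm_num
    simp only [Units.smul_def, Units.val_pow_eq_pow_val, Units.val_neg,
      Units.val_one, zsmul_eq_mul]
    push_cast
    linear_combination (-∏ a : ZMod (k+1+1), w a) * hk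

lemma shiftMatrix_pow (n : ℕ) [NeZero n] (d : ZMod n → ℕ) (k : ℕ) :
    shiftMatrix n d ^ k =
      wshift n k (fun a => Polynomial.X ^ (∑ j ∈ Finset.range k, d (a + (j : ZMod n)))) := by
  induction k with
  | zero =>
    rw [pow_zero]
    ext a b
    simp only [wshift, Nat.cast_zero, add_zero, Finset.range_zero, Finset.sum_empty,
      pow_zero, Matrix.one_apply]
    by_cases h : a = b
    · simp [h]
    · simp [h, Ne.symm h]
  | succ k ih =>
    rw [pow_succ, ih]
    refine Matrix.ext (fun a b => ?_)
    rw [Matrix.mul_apply]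
    simp only [wshift, shiftMatrix, ite_mul, zero_mul]
    rw [Finset.sum_ite_eq' Finset.univ (a + (k : ZMod n))]
    simp only [Finset.mem_univ, if_true]
    by_cases hb : b = a + ((k:ℕ) + 1 : ℕ)
    · have hb' : b = a + (k : ZMod n) + 1 := by rw [hb]; push_cast; ring
      rw [if_pos hb', if_pos hb]
      rw [← pow_add, ← Finset.sum_range_succ]
    · have hb' : ¬ (b = a + (k : ZMod n) + 1) := by
        intro h; apply hb; rw [h]; push_cast; ring
      rw [if_neg hb', if_neg hb, mul_zero]

end CycDet

section Decomp

variable {R : Type*} [CommRing R]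
variable (n ℓ g m q : ℕ)

/-- `ψ j = ℓ * j.val` in `ZMod n`. -/
def psiFun (j : ZMod m) : ZMod n := ((ℓ * j.val : ℕ) : ZMod n)

/-- the reindexing map -/
def eFun (p : ZMod m × ZMod g) : ZMod n := psiFun n ℓ m p.1 + ((p.2.val : ℕ) : ZMod n)

variable [NeZero n] [NeZero m] [NeZero g]
variable (hn : n = g * m) (hl : ℓ = g * q)

include hn hl

lemma cast_lm_zero : ((ℓ * m : ℕ) : ZMod n) = 0 := by
  have h : ℓ * m = n * q := by subst hn hl; ring
  rw [h]
  push_cast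
  simp [ZMod.natCast_self]

lemma key_mod (x : ℕ) : ((ℓ * (x % m) : ℕ) : ZMod n) = ((ℓ * x : ℕ) : ZMod n) := by
  conv_rhs => rw [show x = m * (x / m) + x % m from (Nat.div_add_mod x m).symm]
  have h1 : ℓ * (m * (x / m) + x % m) = (ℓ * m) * (x / m) + ℓ * (x % m) := by ring
  rw [h1]
  have h0 : ((ℓ * m : ℕ) : ZMod n) = 0 := cast_lm_zero n ℓ g m q hn hl
  push_cast at h0 ⊢
  rw [h0]
  ring

lemma psiFun_natCast (x : ℕ) : psiFun n ℓ m ((x : ZMod m)) = ((ℓ * x : ℕ) : ZMod n) := by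
  rw [psiFun, ZMod.val_natCast, key_mod n ℓ g m q hn hl]

lemma psiFun_add (a b : ZMod m) :
    psiFun n ℓ m (a + b) = psiFun n ℓ m a + psiFun n ℓ m b := by
  have ha : ((a.val : ℕ) : ZMod m) = a := ZMod.natCast_rightInverse a
  have hb : ((b.val : ℕ) : ZMod m) = b := ZMod.natCast_rightInverse b
  have h : a + b = (((a.val + b.val : ℕ)) : ZMod m) := by push_cast [ha, hb]; ring
  rw [h, psiFun_natCast n ℓ g m q hn hl]
  have h2 : ℓ * (a.val + b.val) = ℓ * a.val + ℓ * b.val := by ring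
  rw [h2]
  simp only [psiFun]
  push_cast
  ring

lemma psiFun_one : psiFun n ℓ m 1 = ((ℓ : ℕ) : ZMod n) := by
  have h : (1 : ZMod m) = ((1 : ℕ) : ZMod m) := by norm_cast
  rw [h, psiFun_natCast n ℓ g m q hn hl, mul_one]

lemma psiFun_intCast (z : ℤ) :
    psiFun n ℓ m ((z : ZMod m)) = ((ℓ : ℕ) : ZMod n) * ((z : ℤ) : ZMod n) := by
  set δ : ZMod m := (z : ZMod m) with hδ
  have h1 : ((δ.val : ℤ) : ZMod m) = ((z : ℤ) : ZMod m) := by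
    push_cast
    rw [ZMod.natCast_val, hδ]
    simp
  have h2 : (m : ℤ) ∣ z - (δ.val : ℤ) := ((ZMod.intCast_eq_intCast_iff _ _ _).mp h1).dvd
  obtain ⟨t, ht⟩ := h2
  have h3 : ((δ.val : ℕ) : ZMod n) = ((z : ℤ) : ZMod n) - ((m:ℕ) : ZMod n) * ((t : ℤ) : ZMod n) := by
    have h4 : ((δ.val : ℤ)) = z - m * t := by omega
    have h5 : ((δ.val : ℤ) : ZMod n) = ((z - m * t : ℤ) : ZMod n) := by rw [h4]
    push_cast at h5 ⊢
    rw [h5]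
    try ring
  have h0 : ((ℓ:ℕ) : ZMod n) * ((m:ℕ) : ZMod n) = 0 := by
    have := cast_lm_zero n ℓ g m q hn hl
    push_cast at this
    exact this
  show ((ℓ * δ.val : ℕ) : ZMod n) = _
  push_cast
  push_cast at h3
  rw [h3]
  linear_combination (-(t : ZMod n)) * h0

lemma eFun_step (j : ZMod m) (r : ZMod g) :
    eFun n ℓ g m (j + 1, r) = eFun n ℓ g m (j, r) + ((ℓ : ℕ) : ZMod n) := by
  simp only [eFun, psiFun_add n ℓ g m q hn hl, psiFun_one n ℓ g m q hn hl]
  ring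

variable (hB : ∃ β : ℤ, ((g : ℕ) : ZMod n) = ((ℓ : ℕ) : ZMod n) * ((β : ℤ) : ZMod n))

include hB

lemma eFun_surjective : Function.Surjective (eFun n ℓ g m) := by
  obtain ⟨β, hβ⟩ := hB
  intro x
  set u : ℕ := x.val / g with hu
  set v : ℕ := x.val % g with hv
  refine ⟨⟨((β * (u : ℤ) : ℤ) : ZMod m), ((x.val : ℕ) : ZMod g)⟩, ?_⟩
  simp only [eFun]
  rw [psiFun_intCast n ℓ g m q hn hl, ZMod.val_natCast, ← hv]
  have h1 : (((β * (u:ℤ)) : ℤ) : ZMod n) = ((β:ℤ) : ZMod n) * ((u:ℕ) : ZMod n) := by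
    push_cast; ring
  rw [h1, ← mul_assoc, ← hβ]
  have h2 : ((g:ℕ) : ZMod n) * ((u:ℕ):ZMod n) + ((v:ℕ):ZMod n) = ((g*u+v : ℕ) : ZMod n) := by
    push_cast; ring
  rw [h2, hu, hv, Nat.div_add_mod]
  exact ZMod.natCast_rightInverse x

lemma eFun_bijective : Function.Bijective (eFun n ℓ g m) := by
  rw [Fintype.bijective_iff_surjective_and_card]
  refine ⟨eFun_surjective n ℓ g m q hn hl hB, ?_⟩
  rw [Fintype.card_prod, ZMod.card, ZMod.card, ZMod.card, hn]
  ring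

theorem det_one_sub_wshift (w : ZMod n → R) :
    (1 - wshift n ℓ w).det
      = ∏ r : ZMod g, (1 - ∏ j : ZMod m, w (eFun n ℓ g m (j, r))) := by
  have hbij := eFun_bijective n ℓ g m q hn hl hB
  have hinj := hbij.injective
  set E : (ZMod m × ZMod g) ≃ ZMod n := Equiv.ofBijective _ hbij with hE
  rw [← Matrix.det_submatrix_equiv_self E]
  have hsub : (1 - wshift n ℓ w).submatrix E E
      = Matrix.blockDiagonal
          (fun r : ZMod g => (1 : Matrix (ZMod m) (ZMod m) R)
            - cycMatrix m (fun j => w (eFun n ℓ g m (j, r)))) := by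
    refine Matrix.ext (fun p p' => ?_)
    obtain ⟨j, r⟩ := p
    obtain ⟨j', r'⟩ := p'
    have hEapp : ∀ p : ZMod m × ZMod g, E p = eFun n ℓ g m p := fun p => rfl
    rw [Matrix.submatrix_apply, Matrix.sub_apply, Matrix.blockDiagonal_apply,
      hEapp, hEapp]
    have hcond2 : (eFun n ℓ g m (j', r') = eFun n ℓ g m (j, r) + ((ℓ:ℕ) : ZMod n))
        ↔ (j' = j + 1 ∧ r' = r) := by
      rw [← eFun_step n ℓ g m q hn hl, hinj.eq_iff, Prod.mk.injEq]
    rw [Matrix.one_apply, wshift]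
    simp only [hinj.eq_iff, hcond2, Prod.mk.injEq]
    by_cases hr : r = r'
    · subst hr
      simp only [if_pos rfl, Matrix.sub_apply, Matrix.one_apply, cycMatrix]
      by_cases hj : j = j'
      · subst hj
        simp
      · simp [hj, and_comm]
    · simp [hr, Ne.symm hr, fun h : j = j' => hr]
  rw [hsub, Matrix.det_blockDiagonal]
  exact Finset.prod_congr rfl (fun r _ => det_one_sub_cycMatrix m _)

theorem counting (d : ZMod n → ℕ) (r : ZMod g) :
    ∑ j : ZMod m, ∑ k ∈ Finset.range ℓ, d (eFun n ℓ g m (j, r) + (k : ZMod n))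
      = q * ∑ x : ZMod n, d x := by
  set G : ZMod n → ℕ := fun x => ∑ j : ZMod m, d (psiFun n ℓ m j + x) with hG
  -- step invariance
  have Gshift : ∀ x : ZMod n, G (x + ((g:ℕ) : ZMod n)) = G x := by
    obtain ⟨β, hβ⟩ := hB
    intro x
    have hψδ : psiFun n ℓ m ((β : ZMod m)) = ((g:ℕ) : ZMod n) := by
      rw [psiFun_intCast n ℓ g m q hn hl, ← hβ]
    refine Fintype.sum_equiv (Equiv.addRight ((β : ℤ) : ZMod m)) _ _ (fun j => ?_)
    have : psiFun n ℓ m (j + ((β : ℤ) : ZMod m)) = psiFun n ℓ m j + ((g:ℕ) : ZMod n) := by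
      rw [psiFun_add n ℓ g m q hn hl, hψδ]
    simp only [Equiv.coe_addRight, this]
    congr 1
    ring
  have GshiftN : ∀ (i : ℕ) (x : ZMod n), G (x + ((g * i : ℕ) : ZMod n)) = G x := by
    intro i
    induction i with
    | zero => intro x; simp
    | succ i ih =>
      intro x
      have h1 : ((g * (i+1) : ℕ) : ZMod n) = ((g:ℕ):ZMod n) + ((g*i : ℕ) : ZMod n) := by
        push_cast; ring
      rw [h1, ← add_assoc, ih, Gshift]
  -- block sum over range (g * Q)
  have aux : ∀ (Q : ℕ) (y : ZMod n),
      ∑ k ∈ Finset.range (g * Q), G (y + (k : ZMod n))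
        = Q * ∑ s ∈ Finset.range g, G (y + (s : ZMod n)) := by
    intro Q
    induction Q with
    | zero => intro y; simp
    | succ Q ih =>
      intro y
      have h1 : g * (Q + 1) = g * Q + g := by ring
      rw [h1, Finset.sum_range_add, ih]
      have h2 : ∀ s ∈ Finset.range g,
          G (y + ((g * Q + s : ℕ) : ZMod n)) = G (y + (s : ZMod n)) := by
        intro s _
        have h3 : y + ((g * Q + s : ℕ) : ZMod n) = (y + (s : ZMod n)) + ((g * Q : ℕ) : ZMod n) := by
          push_cast; ring
        rw [h3, GshiftN]
      rw [Finset.sum_congr rfl h2]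
      ring
  -- rewrite LHS as range-ℓ sum of G
  have hswap : ∑ j : ZMod m, ∑ k ∈ Finset.range ℓ, d (eFun n ℓ g m (j, r) + (k : ZMod n))
      = ∑ k ∈ Finset.range ℓ, G (((r.val : ℕ) : ZMod n) + (k : ZMod n)) := by
    rw [Finset.sum_comm]
    refine Finset.sum_congr rfl (fun k _ => ?_)
    refine Finset.sum_congr rfl (fun j _ => ?_)
    congr 1
    simp only [eFun]
    ring
  rw [hswap]
  have hltot : ℓ = g * q := hl
  rw [hltot, aux q (((r.val : ℕ) : ZMod n))]
  congr 1
  -- ∑_{s ∈ range g} G (r̄ + s̄) = ∑_x d x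
  have hbij := eFun_bijective n ℓ g m q hn hl hB
  have hstep1 : ∑ s ∈ Finset.range g, G (((r.val : ℕ) : ZMod n) + (s : ZMod n))
      = ∑ s' : ZMod g, G (((r.val : ℕ) : ZMod n) + ((s'.val : ℕ) : ZMod n)) := by
    refine Finset.sum_nbij' (fun s => ((s : ℕ) : ZMod g)) (fun s' => s'.val) ?_ ?_ ?_ ?_ ?_
    · intro a _; exact Finset.mem_univ _
    · intro a _; exact Finset.mem_range.mpr (ZMod.val_lt _)
    · intro a ha; exact ZMod.val_cast_of_lt (Finset.mem_range.mp ha)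
    · intro a _; exact ZMod.natCast_rightInverse a
    · intro a ha
      congr 2
      rw [ZMod.val_cast_of_lt (Finset.mem_range.mp ha)]
  rw [hstep1]
  have hstep2 : ∑ s' : ZMod g, G (((r.val : ℕ) : ZMod n) + ((s'.val : ℕ) : ZMod n))
      = ∑ p : ZMod m × ZMod g, d (eFun n ℓ g m p + ((r.val : ℕ) : ZMod n)) := by
    rw [Fintype.sum_prod_type]
    rw [Finset.sum_comm]
    refine Finset.sum_congr rfl (fun s' _ => ?_)
    refine Finset.sum_congr rfl (fun j _ => ?_)
    congr 1
    simp only [eFun]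
    ring
  rw [hstep2]
  have hbij2 : Function.Bijective (fun p => eFun n ℓ g m p + ((r.val : ℕ) : ZMod n)) := by
    exact (Equiv.addRight (((r.val : ℕ) : ZMod n))).bijective.comp hbij
  exact Fintype.sum_bijective _ hbij2 _ _ (fun p => rfl)

end Decomp

/-- the graded Cartan determinant of a selfinjective Nakayama
algebra: `(1 - t^d̄) · det C = (1 - t^{d̄·ℓ/gcd(n,ℓ)})^{gcd(n,ℓ)}`. -/
theorem graded_cartan_det_selfinjective (n ℓ : ℕ) [NeZero n] (hℓ : 1 ≤ ℓ)
    (d : ZMod n → ℕ) :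
    (1 - Polynomial.X ^ (∑ a, d a)) *
        (∑ i ∈ Finset.range ℓ, (shiftMatrix n d) ^ i).det =
      (1 - Polynomial.X ^ ((∑ a, d a) * ℓ / Nat.gcd n ℓ)) ^ Nat.gcd n ℓ := by
  have hn0 : 0 < n := Nat.pos_of_ne_zero (NeZero.ne n)
  set g : ℕ := Nat.gcd n ℓ with hg
  have hg0 : 0 < g := Nat.gcd_pos_of_pos_left ℓ hn0
  set m : ℕ := n / g with hm
  set q : ℕ := ℓ / g with hq
  have hn : n = g * m := (Nat.mul_div_cancel' (Nat.gcd_dvd_left n ℓ)).symm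
  have hl : ℓ = g * q := (Nat.mul_div_cancel' (Nat.gcd_dvd_right n ℓ)).symm
  haveI : NeZero g := ⟨by omega⟩
  haveI : NeZero m := ⟨by intro h; rw [h, mul_zero] at hn; omega⟩
  have hB : ∃ β : ℤ, ((g : ℕ) : ZMod n) = ((ℓ : ℕ) : ZMod n) * ((β : ℤ) : ZMod n) := by
    refine ⟨Nat.gcdB n ℓ, ?_⟩
    have hbez := Nat.gcd_eq_gcd_ab n ℓ
    have : (((Nat.gcd n ℓ : ℤ)) : ZMod n)
        = (((n : ℤ) * Nat.gcdA n ℓ + (ℓ : ℤ) * Nat.gcdB n ℓ : ℤ) : ZMod n) := by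
      rw [← hbez]
    push_cast at this ⊢
    rw [this]
    simp [ZMod.natCast_self]
  set D := shiftMatrix n d with hD
  -- geometric identity
  have h1 : (∑ i ∈ Finset.range ℓ, D ^ i) * (D - 1) = D ^ ℓ - 1 := geom_sum_mul D ℓ
  have h2 := congrArg Matrix.det h1
  rw [Matrix.det_mul] at h2
  have hcard : Fintype.card (ZMod n) = n := ZMod.card n
  have hdet1 : (D - 1).det = (-1:Polynomial ℤ)^n * (1 - D).det := by
    rw [show D - 1 = -(1 - D) from (neg_sub _ _).symm, Matrix.det_neg, hcard]
  have hdet2 : (D ^ ℓ - 1).det = (-1:Polynomial ℤ)^n * (1 - D ^ ℓ).det := by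
    rw [show D ^ ℓ - 1 = -(1 - D ^ ℓ) from (neg_sub _ _).symm, Matrix.det_neg, hcard]
  rw [hdet1, hdet2] at h2
  have hne : ((-1:Polynomial ℤ))^n ≠ 0 := pow_ne_zero _ (by norm_num)
  have h3 : (1 - D).det * (∑ i ∈ Finset.range ℓ, D ^ i).det = (1 - D ^ ℓ).det :=
    mul_left_cancel₀ hne (by linear_combination h2)
  -- det (1 - D)
  have hDcyc : D = cycMatrix n (fun a => Polynomial.X ^ d a) := rfl
  have hdetD : (1 - D).det = 1 - Polynomial.X ^ (∑ a, d a) := by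
    rw [hDcyc, det_one_sub_cycMatrix, Finset.prod_pow_eq_pow_sum]
  -- det (1 - D^ℓ)
  have hdetDl : (1 - D ^ ℓ).det = (1 - Polynomial.X ^ ((∑ a, d a) * q)) ^ g := by
    rw [hD, shiftMatrix_pow n d ℓ]
    rw [det_one_sub_wshift n ℓ g m q hn hl hB]
    have hfac : ∀ r : ZMod g,
        ((1 : Polynomial ℤ) - ∏ j : ZMod m, (Polynomial.X : Polynomial ℤ) ^
            (∑ k ∈ Finset.range ℓ, d (eFun n ℓ g m (j, r) + (k : ZMod n))))
          = 1 - Polynomial.X ^ ((∑ a, d a) * q) := by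
      intro r
      rw [Finset.prod_pow_eq_pow_sum]
      congr 2
      rw [counting n ℓ g m q hn hl hB d r]
      ring
    rw [Finset.prod_congr rfl (fun r _ => hfac r), Finset.prod_const,
      Finset.card_univ, ZMod.card]
  have hexp : (∑ a, d a) * ℓ / g = (∑ a, d a) * q := by
    rw [hl, show g * q = q * g from mul_comm g q, ← mul_assoc,
      Nat.mul_div_cancel _ hg0]
  rw [hexp, ← hdetD, h3, hdetDl]
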